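/- There is a constant C depending only on the dimension d such that for every s ∈ R^d, the function log_{s,-s}(x) = log|x−s| − log|x+s| satisfies ||log_{s,-s}||*_BMO = ||log_{s,-s}||_BMO + |(log_{s,-s})_{Q_0}| ≤ C. -/

import Mathlib

open MeasureTheory Filter Set

noncomputable section

namespace TL

/-- Euclidean space `ℝ^d`. -/
abbrev Rd (d : ℕ) := EuclideanSpace ℝ (Fin d)

variable {d : ℕ}

/-- An axis-parallel cube in `ℝ^d` with center `c` and side length `len > 0`. -/
structure Cube (d : ℕ) where
  c : Rd d
  len : ℝ
  len_pos : 0 < len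

namespace Cube

/-- The set of points of the cube. -/
def set (Q : Cube d) : Set (Rd d) := {x | ∀ i, |x i - Q.c i| < Q.len / 2}

/-- The volume `ℓ^d` of a cube. -/
def vol (Q : Cube d) : ℝ := Q.len ^ d

/-- The cube dilated `α` times with respect to its center. -/
def dilate (Q : Cube d) (α : ℝ) (hα : 0 < α) : Cube d :=
  ⟨Q.c, α * Q.len, mul_pos hα Q.len_pos⟩

/-- The cube `2Q`. -/
def double (Q : Cube d) : Cube d := Q.dilate 2 two_pos

end Cube

/-- The average `f_Q` of `f` over the cube `Q`. -/
def avg (Q : Cube d) (f : Rd d → ℝ) : ℝ := (Q.vol)⁻¹ * ∫ x in Q.set, f x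

/-- The mean oscillation `‖f‖_Q = inf_b |Q|⁻¹ ∫_Q |f-b|`. -/
def osc (Q : Cube d) (f : Rd d → ℝ) : ℝ :=
  ⨅ b : ℝ, (Q.vol)⁻¹ * ∫ x in Q.set, |f x - b|

/-- The fixed unit cube `Q₀` centered at the origin. -/
def Q0 (d : ℕ) : Cube d := ⟨0, 1, one_pos⟩

/-- The `BMO` seminorm `sup_Q ‖f‖_Q`. -/
def bmoSeminorm (f : Rd d → ℝ) : ℝ := ⨆ Q : Cube d, osc Q f

/-- Membership in `BMO(ℝ^d)`: local integrability together with finiteness of the seminorm. -/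
def MemBMO (f : Rd d → ℝ) : Prop :=
  LocallyIntegrable f volume ∧ BddAbove (Set.range fun Q : Cube d => osc Q f)

/-- The `BMO` norm `‖f‖*_BMO = ‖f‖_BMO + |f_{Q₀}|`. -/
def bmoNorm (f : Rd d → ℝ) : ℝ := bmoSeminorm f + |avg (Q0 d) f|

/-- The side length `ℓ̃` of the smallest axis-parallel cube `Q̃` containing `Q` and `Q₀`. -/
def tildeLen (Q : Cube d) : ℝ :=
  ⨆ i : Fin d, (max (Q.c i + Q.len / 2) (1 / 2) - min (Q.c i - Q.len / 2) (-(1 / 2)))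

/-- The log-distance function `L(Q) = log max(ℓ̃/ℓ, ℓ̃) + 1`. -/
def Lfun (Q : Cube d) : ℝ := Real.log (max (tildeLen Q / Q.len) (tildeLen Q)) + 1

/-- The `LMO` seminorm `sup_Q L(Q)·‖f‖_Q`. -/
def lmoSeminorm (f : Rd d → ℝ) : ℝ := ⨆ Q : Cube d, Lfun Q * osc Q f

/-- Membership in `LMO(ℝ^d)`. -/
def MemLMO (f : Rd d → ℝ) : Prop :=
  LocallyIntegrable f volume ∧ BddAbove (Set.range fun Q : Cube d => Lfun Q * osc Q f)

/-- A Calderón–Zygmund kernel on `ℝ^d` with regularity exponent `δ ∈ (0,1]`. -/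
structure CZKernel (d : ℕ) where
  K : Rd d → Rd d → ℝ
  C : ℝ
  δ : ℝ
  δ_pos : 0 < δ
  δ_le_one : δ ≤ 1
  meas : Measurable (Function.uncurry K)
  size : ∀ x y : Rd d, x ≠ y → |K x y| ≤ C * ‖x - y‖ ^ (-(d : ℝ))
  regularity : ∀ x₁ x₂ y : Rd d, x₁ ≠ y → 2 * ‖x₁ - x₂‖ ≤ ‖x₁ - y‖ →
    |K x₁ y - K x₂ y| ≤ C * ‖x₁ - x₂‖ ^ δ / ‖x₁ - y‖ ^ ((d : ℝ) + δ)

/-- A Calderón–Zygmund operator: a bounded linear operator on `L²(ℝ^d)` associated to a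
Calderón–Zygmund kernel, i.e. represented by integration against the kernel a.e. outside
the support of compactly supported `L²` functions. -/
structure CZOperator (d : ℕ) extends CZKernel d where
  T : Lp ℝ 2 (volume : Measure (Rd d)) →L[ℝ] Lp ℝ 2 (volume : Measure (Rd d))
  repr : ∀ f : Lp ℝ 2 (volume : Measure (Rd d)),
    HasCompactSupport (f : Rd d → ℝ) →
    ∀ᵐ x : Rd d, x ∉ tsupport (f : Rd d → ℝ) → (T f : Rd d → ℝ) x = ∫ y, K x y * f y

open Classical in
/-- The local part `∫_{2Q} K(x,y) g(y) dy` of `T_Q g`, interpreted in the `L²` sense: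
`T` applied to `g·χ_{2Q}` (and junk value `0` if `g·χ_{2Q} ∉ L²`). -/
def TQloc (S : CZOperator d) (Q : Cube d) (g : Rd d → ℝ) : Rd d → ℝ :=
  fun x =>
    if h : MemLp (Q.double.set.indicator g) 2 (volume : Measure (Rd d)) then
      (S.T (MemLp.toLp _ h) : Rd d → ℝ) x
    else 0

/-- The tail part `∫_{ℝ^d∖2Q} (K(x,y)-K(c,y)) g(y) dy` of `T_Q g`. -/
def TQtail (S : CZOperator d) (Q : Cube d) (g : Rd d → ℝ) : Rd d → ℝ :=
  fun x => ∫ y in (Q.double.set)ᶜ, (S.K x y - S.K Q.c y) * g y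

/-- `T_Q g (x) = ∫_{2Q} K(x,y)g(y)dy + ∫_{ℝ^d∖2Q}(K(x,y)-K(c,y))g(y)dy` for `x ∈ Q`. -/
def TQ (S : CZOperator d) (Q : Cube d) (g : Rd d → ℝ) : Rd d → ℝ :=
  fun x => TQloc S Q g x + TQtail S Q g x

/-- `T_Q 1`, where `1` is the constant function `χ_{ℝ^d}`. -/
def Tone (S : CZOperator d) (Q : Cube d) : Rd d → ℝ := TQ S Q (fun _ => 1)

/-- For `f ∈ BMO`, `T_Q f = f_{2Q}·T_Q1 + T_Q(f - f_{2Q})`. -/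
def TQbmo (S : CZOperator d) (Q : Cube d) (f : Rd d → ℝ) : Rd d → ℝ :=
  fun x => avg Q.double f * Tone S Q x + TQ S Q (fun y => f y - avg Q.double f) x

/-- The seminorm `‖Tf‖_BMO = sup_Q ‖T_Q f‖_Q` for `f ∈ BMO`. -/
def TbmoSeminorm (S : CZOperator d) (f : Rd d → ℝ) : ℝ :=
  ⨆ Q : Cube d, osc Q (TQbmo S Q f)

/-- The function `log|x|`. -/
def logAbs : Rd d → ℝ := fun x => Real.log ‖x‖

/-- The function `log_{s,-s}(x) = log|x-s| - log|x+s|`. -/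
def logss (s : Rd d) : Rd d → ℝ := fun x => Real.log ‖x - s‖ - Real.log ‖x + s‖

section Auxiliary

open Real

/-- The pi-type version of a cube. -/
def Cube.piSet (Q : Cube d) : Set (Fin d → ℝ) :=
  Set.univ.pi fun i => Set.Ioo (Q.c i - Q.len / 2) (Q.c i + Q.len / 2)

lemma Cube.set_eq_preimage (Q : Cube d) :
    Q.set = (MeasurableEquiv.toLp 2 (Fin d → ℝ)).symm ⁻¹' Q.piSet := by
  ext x
  simp only [Cube.set, Set.mem_setOf_eq, Cube.piSet, Set.mem_preimage, Set.mem_pi, Set.mem_univ,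
    true_implies, Set.mem_Ioo]
  refine forall_congr' fun i => ?_
  have : ((MeasurableEquiv.toLp 2 (Fin d → ℝ)).symm) x i = x i := rfl
  rw [this, abs_sub_lt_iff]
  constructor
  · rintro ⟨h1, h2⟩; constructor <;> linarith
  · rintro ⟨h1, h2⟩; constructor <;> linarith

lemma Cube.measurableSet_piSet (Q : Cube d) : MeasurableSet Q.piSet :=
  MeasurableSet.univ_pi fun _ => measurableSet_Ioo

lemma Cube.measurableSet_set (Q : Cube d) : MeasurableSet Q.set := by
  rw [Q.set_eq_preimage]
  exact Q.measurableSet_piSet.preimage ((MeasurableEquiv.toLp 2 (Fin d → ℝ)).symm).measurable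

lemma Cube.vol_pos (Q : Cube d) : 0 < Q.vol := pow_pos Q.len_pos d

lemma Cube.volume_piSet (Q : Cube d) : volume Q.piSet = ENNReal.ofReal Q.vol := by
  rw [Cube.piSet, volume_pi_pi]
  have : ∀ i : Fin d, volume (Set.Ioo (Q.c i - Q.len / 2) (Q.c i + Q.len / 2))
      = ENNReal.ofReal Q.len := by
    intro i; rw [Real.volume_Ioo]; ring_nf
  simp only [this, Finset.prod_const, Finset.card_univ, Fintype.card_fin]
  rw [Cube.vol, ← ENNReal.ofReal_pow Q.len_pos.le]

lemma Cube.volume_set (Q : Cube d) : volume Q.set = ENNReal.ofReal Q.vol := by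
  rw [Q.set_eq_preimage,
    (EuclideanSpace.volume_preserving_symm_measurableEquiv_toLp (Fin d)).measure_preimage
      Q.measurableSet_piSet.nullMeasurableSet, Q.volume_piSet]

lemma Cube.volume_set_lt_top (Q : Cube d) : volume Q.set < ⊤ := by
  rw [Q.volume_set]; exact ENNReal.ofReal_lt_top

lemma Cube.volume_set_toReal (Q : Cube d) : (volume Q.set).toReal = Q.vol := by
  rw [Q.volume_set, ENNReal.toReal_ofReal Q.vol_pos.le]

/-- Bounding the oscillation by the value at a particular `b`. -/
lemma osc_le_of_b (Q : Cube d) (f : Rd d → ℝ) (b : ℝ) :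
    osc Q f ≤ (Q.vol)⁻¹ * ∫ x in Q.set, |f x - b| := by
  refine ciInf_le ⟨0, ?_⟩ b
  rintro y ⟨b', rfl⟩
  exact mul_nonneg (inv_nonneg.2 Q.vol_pos.le) (integral_nonneg fun x => abs_nonneg _)

/-- Pointwise bound `max (log l - log u) 0 ≤ 2 √l u^{-1/2}`. -/
lemma max_log_le {l u : ℝ} (hl : 0 < l) (hu : 0 < u) :
    max (Real.log l - Real.log u) 0 ≤ 2 * l ^ (2⁻¹ : ℝ) * u ^ (-(2⁻¹) : ℝ) := by
  have hrpos : 0 < l ^ (2⁻¹ : ℝ) * u ^ (-(2⁻¹) : ℝ) :=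
    mul_pos (Real.rpow_pos_of_pos hl _) (Real.rpow_pos_of_pos hu _)
  rcases le_or_gt (Real.log l - Real.log u) 0 with h | h
  · rw [max_eq_right h]; positivity
  · rw [max_eq_left h.le, ← Real.log_div hl.ne' hu.ne']
    have hv : 0 < l / u := div_pos hl hu
    have h2 : Real.log (l / u) = 2 * Real.log ((l / u) ^ (2⁻¹ : ℝ)) := by
      rw [Real.log_rpow hv]; ring
    have h3 : Real.log ((l / u) ^ (2⁻¹ : ℝ)) ≤ (l / u) ^ (2⁻¹ : ℝ) - 1 :=
      Real.log_le_sub_one_of_pos (Real.rpow_pos_of_pos hv _)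
    have h4 : (l / u) ^ (2⁻¹ : ℝ) = l ^ (2⁻¹ : ℝ) * u ^ (-(2⁻¹) : ℝ) := by
      rw [Real.div_rpow hl.le hu.le, Real.rpow_neg hu.le, div_eq_mul_inv]
    rw [h4] at h2 h3
    linarith

lemma rpow_side_pos {l : ℝ} (hl : 0 < l) (a : ℝ) :
    IntegrableOn (fun t : ℝ => (t - a) ^ (-(2⁻¹) : ℝ)) (Set.Ioo a (a + l)) volume ∧
    ∫ t in Set.Ioo a (a + l), (t - a) ^ (-(2⁻¹) : ℝ) = 2 * l ^ ((2⁻¹ : ℝ)) := by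
  have h1 : IntervalIntegrable (fun u : ℝ => u ^ (-(2⁻¹) : ℝ)) volume 0 l :=
    intervalIntegral.intervalIntegrable_rpow' (by norm_num)
  have h2 : IntervalIntegrable (fun t : ℝ => (t - a) ^ (-(2⁻¹) : ℝ)) volume a (a + l) := by
    have := h1.comp_sub_right a
    rw [zero_add, add_comm l a] at this
    exact this
  have hle : a ≤ a + l := by linarith
  have hint : IntegrableOn (fun t : ℝ => (t - a) ^ (-(2⁻¹) : ℝ)) (Set.Ioo a (a + l)) volume := by
    refine ((intervalIntegrable_iff_integrableOn_Ioc_of_le hle).1 h2).mono_set Set.Ioo_subset_Ioc_self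
  refine ⟨hint, ?_⟩
  rw [← MeasureTheory.integral_Ioc_eq_integral_Ioo, ← intervalIntegral.integral_of_le hle,
    intervalIntegral.integral_comp_sub_right (fun u => u ^ (-(2⁻¹) : ℝ)) a]
  have hb : a + l - a = l := by ring
  have ha : a - a = 0 := by ring
  rw [hb, ha, integral_rpow (Or.inl (by norm_num))]
  rw [Real.zero_rpow (by norm_num)]
  norm_num
  rw [div_eq_mul_inv]
  norm_num
  ring

lemma rpow_side_neg {l : ℝ} (hl : 0 < l) (a : ℝ) :
    IntegrableOn (fun t : ℝ => (a - t) ^ (-(2⁻¹) : ℝ)) (Set.Ioo (a - l) a) volume ∧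
    ∫ t in Set.Ioo (a - l) a, (a - t) ^ (-(2⁻¹) : ℝ) = 2 * l ^ ((2⁻¹ : ℝ)) := by
  have h1 : IntervalIntegrable (fun u : ℝ => u ^ (-(2⁻¹) : ℝ)) volume 0 l :=
    intervalIntegral.intervalIntegrable_rpow' (by norm_num)
  have h2 : IntervalIntegrable (fun t : ℝ => (a - t) ^ (-(2⁻¹) : ℝ)) volume (a - 0) (a - l) :=
    h1.comp_sub_left a
  have hle : a - l ≤ a := by linarith
  have h2' : IntervalIntegrable (fun t : ℝ => (a - t) ^ (-(2⁻¹) : ℝ)) volume (a - l) a := by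
    refine IntervalIntegrable.symm ?_
    simpa using h2
  have hint : IntegrableOn (fun t : ℝ => (a - t) ^ (-(2⁻¹) : ℝ)) (Set.Ioo (a - l) a) volume := by
    refine ((intervalIntegrable_iff_integrableOn_Ioc_of_le hle).1 h2').mono_set
      Set.Ioo_subset_Ioc_self
  refine ⟨hint, ?_⟩
  rw [← MeasureTheory.integral_Ioc_eq_integral_Ioo, ← intervalIntegral.integral_of_le hle,
    intervalIntegral.integral_comp_sub_left (fun u => u ^ (-(2⁻¹) : ℝ)) a]
  have hb : a - (a - l) = l := by ring
  have ha : a - a = 0 := by ring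
  rw [hb, ha, intervalIntegral.integral_symm, integral_rpow (Or.inl (by norm_num))]
  rw [Real.zero_rpow (by norm_num)]
  norm_num
  rw [div_eq_mul_inv]
  norm_num
  ring

/-- The 1-dimensional estimate: `∫ max (log l - log |t-a|) 0 dt ≤ 8 l`. -/
lemma oneDim (a : ℝ) {l : ℝ} (hl : 0 < l) :
    Integrable (fun t : ℝ => max (Real.log l - Real.log |t - a|) 0) volume ∧
    ∫ t : ℝ, max (Real.log l - Real.log |t - a|) 0 ≤ 8 * l := by
  obtain ⟨hip, hvp⟩ := rpow_side_pos hl a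
  obtain ⟨hin, hvn⟩ := rpow_side_neg hl a
  set c : ℝ := 2 * l ^ (2⁻¹ : ℝ) with hc
  have hc0 : 0 ≤ c := by positivity
  set Gp : ℝ → ℝ := Set.indicator (Set.Ioo a (a + l)) (fun t => c * (t - a) ^ (-(2⁻¹) : ℝ))
  set Gn : ℝ → ℝ := Set.indicator (Set.Ioo (a - l) a) (fun t => c * (a - t) ^ (-(2⁻¹) : ℝ))
  have hGp : Integrable Gp volume :=
    (integrable_indicator_iff measurableSet_Ioo).2 (hip.const_mul c)
  have hGn : Integrable Gn volume :=
    (integrable_indicator_iff measurableSet_Ioo).2 (hin.const_mul c)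
  have hGp0 : ∀ t, 0 ≤ Gp t := by
    intro t
    refine Set.indicator_nonneg (fun t ht => ?_) t
    exact mul_nonneg hc0 (Real.rpow_nonneg (by linarith [ht.1] : (0:ℝ) ≤ t - a) _)
  have hGn0 : ∀ t, 0 ≤ Gn t := by
    intro t
    refine Set.indicator_nonneg (fun t ht => ?_) t
    exact mul_nonneg hc0 (Real.rpow_nonneg (by linarith [ht.2] : (0:ℝ) ≤ a - t) _)
  have hae : ∀ᵐ t : ℝ, t ≠ a := by
    rw [ae_iff]
    have : {t : ℝ | ¬ t ≠ a} = {a} := by ext t; simp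
    rw [this]
    exact measure_singleton a
  have hbound : ∀ᵐ t : ℝ, max (Real.log l - Real.log |t - a|) 0 ≤ Gp t + Gn t := by
    filter_upwards [hae] with t ht
    rcases lt_trichotomy t a with h | h | h
    · -- t < a
      rcases le_or_gt t (a - l) with h2 | h2
      · -- far: max = 0
        have : Real.log l ≤ Real.log |t - a| := by
          apply Real.log_le_log hl
          rw [abs_of_neg (by linarith)]
          linarith
        rw [max_eq_right (by linarith)]
        exact add_nonneg (hGp0 t) (hGn0 t)
      · have htm : t ∈ Set.Ioo (a - l) a := ⟨h2, h⟩
        have htp : t ∉ Set.Ioo a (a + l) := by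
          intro hmem; exact absurd hmem.1 (by linarith)
        have hmem : Gn t = c * (a - t) ^ (-(2⁻¹) : ℝ) := Set.indicator_of_mem htm _
        have hzero : Gp t = 0 := Set.indicator_of_notMem htp _
        rw [hzero, hmem, zero_add]
        have habs : |t - a| = a - t := by rw [abs_of_neg (by linarith)]; ring
        rw [habs, hc]
        exact max_log_le hl (by linarith)
    · exact absurd h ht
    · -- a < t
      rcases le_or_gt (a + l) t with h2 | h2
      · have : Real.log l ≤ Real.log |t - a| := by
          apply Real.log_le_log hl
          rw [abs_of_pos (by linarith)]
          linarith
        rw [max_eq_right (by linarith)]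
        exact add_nonneg (hGp0 t) (hGn0 t)
      · have htm : t ∈ Set.Ioo a (a + l) := ⟨h, h2⟩
        have htn : t ∉ Set.Ioo (a - l) a := by
          intro hmem; exact absurd hmem.2 (by linarith)
        have hmem : Gp t = c * (t - a) ^ (-(2⁻¹) : ℝ) := Set.indicator_of_mem htm _
        have hzero : Gn t = 0 := Set.indicator_of_notMem htn _
        rw [hmem, hzero, add_zero]
        have habs : |t - a| = t - a := abs_of_pos (by linarith)
        rw [habs, hc]
        exact max_log_le hl (by linarith)
  have hmeas : Measurable (fun t : ℝ => max (Real.log l - Real.log |t - a|) 0) := by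
    apply Measurable.max _ measurable_const
    exact (measurable_const.sub (Real.measurable_log.comp ((measurable_id.sub measurable_const).abs)))
  have hIG : Integrable (fun t => Gp t + Gn t) volume := hGp.add hGn
  have hInt : Integrable (fun t : ℝ => max (Real.log l - Real.log |t - a|) 0) volume := by
    refine Integrable.mono' hIG hmeas.aestronglyMeasurable ?_
    filter_upwards [hbound] with t ht
    rw [Real.norm_eq_abs, abs_of_nonneg (le_max_right _ _)]
    exact ht
  refine ⟨hInt, ?_⟩
  have step1 : ∫ t : ℝ, max (Real.log l - Real.log |t - a|) 0 ≤ ∫ t : ℝ, (Gp t + Gn t) :=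
    integral_mono_of_nonneg (Filter.Eventually.of_forall fun t => le_max_right _ _) hIG hbound
  have hll : l ^ (2⁻¹ : ℝ) * l ^ (2⁻¹ : ℝ) = l := by
    rw [← Real.rpow_add hl]
    norm_num
  have step2 : ∫ t : ℝ, (Gp t + Gn t) = 8 * l := by
    rw [integral_add hGp hGn]
    have e1 : ∫ t : ℝ, Gp t = 4 * l := by
      rw [MeasureTheory.integral_indicator measurableSet_Ioo,
        MeasureTheory.integral_const_mul, hvp, hc]
      nlinarith [hll]
    have e2 : ∫ t : ℝ, Gn t = 4 * l := by
      rw [MeasureTheory.integral_indicator measurableSet_Ioo,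
        MeasureTheory.integral_const_mul, hvn, hc]
      nlinarith [hll]
    rw [e1, e2]; ring
  linarith

lemma abs_coord_le_norm (y : Rd d) (i : Fin d) : |y i| ≤ ‖y‖ := by
  rw [EuclideanSpace.norm_eq]
  have h1 : |y i| = Real.sqrt (‖y i‖ ^ 2) := by
    rw [Real.sqrt_sq_eq_abs, Real.norm_eq_abs, abs_abs]
  rw [h1]
  apply Real.sqrt_le_sqrt
  exact Finset.single_le_sum (f := fun j : Fin d => ‖y j‖ ^ 2)
    (fun j _ => by positivity) (Finset.mem_univ i)

lemma norm_sub_center_le (Q : Cube d) {x : Rd d} (hx : x ∈ Q.set) :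
    ‖x - Q.c‖ ≤ Real.sqrt d * (Q.len / 2) := by
  rw [EuclideanSpace.norm_eq]
  have hsum : ∑ i, ‖(x - Q.c) i‖ ^ 2 ≤ ∑ _i : Fin d, (Q.len / 2) ^ 2 := by
    apply Finset.sum_le_sum
    intro i _
    have hxi : |x i - Q.c i| < Q.len / 2 := hx i
    have h0 : ‖(x - Q.c) i‖ = |x i - Q.c i| := by
      have : (x - Q.c) i = x i - Q.c i := rfl
      rw [this, Real.norm_eq_abs]
    rw [h0]
    have := abs_nonneg (x i - Q.c i)
    nlinarith
  calc Real.sqrt (∑ i, ‖(x - Q.c) i‖ ^ 2) ≤ Real.sqrt (∑ _i : Fin d, (Q.len / 2) ^ 2) :=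
        Real.sqrt_le_sqrt hsum
    _ = Real.sqrt (d * (Q.len / 2) ^ 2) := by
        rw [Finset.sum_const, Finset.card_univ, Fintype.card_fin, nsmul_eq_mul]
    _ = Real.sqrt d * (Q.len / 2) := by
        rw [Real.sqrt_mul (by positivity), Real.sqrt_sq (by linarith [Q.len_pos] : (0:ℝ) ≤ Q.len / 2)]

lemma hyperplane_null (i0 : Fin d) (a : ℝ) : volume {x : Rd d | x i0 = a} = 0 := by
  have hms : MeasurableSet {y : Fin d → ℝ | y i0 = a} :=
    measurableSet_eq_fun (measurable_pi_apply i0) measurable_const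
  have hpre : {x : Rd d | x i0 = a}
      = (MeasurableEquiv.toLp 2 (Fin d → ℝ)).symm ⁻¹' {y : Fin d → ℝ | y i0 = a} := rfl
  rw [hpre, (EuclideanSpace.volume_preserving_symm_measurableEquiv_toLp (Fin d)).measure_preimage
    hms.nullMeasurableSet]
  have hv : (volume : Measure (Fin d → ℝ)) = Measure.pi fun _ => volume := volume_pi
  rw [hv]
  exact Measure.pi_hyperplane (fun _ : Fin d => (volume : Measure ℝ)) i0 a

set_option maxHeartbeats 1000000 in
lemma near_integral (hd : 0 < d) (Q : Cube d) (i0 : Fin d) (a : ℝ) :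
    IntegrableOn (fun x : Rd d => max (Real.log Q.len - Real.log |x i0 - a|) 0) Q.set volume ∧
    ∫ x in Q.set, max (Real.log Q.len - Real.log |x i0 - a|) 0 ≤ 8 * Q.vol := by
  obtain ⟨h1int, h1val⟩ := oneDim a Q.len_pos
  set h : ℝ → ℝ := fun u => max (Real.log Q.len - Real.log |u - a|) 0 with hh
  set t : Fin d → Set ℝ := fun i => Set.Ioo (Q.c i - Q.len / 2) (Q.c i + Q.len / 2) with ht
  set F : Fin d → ℝ → ℝ :=
    fun i => Set.indicator (t i) (fun u => if i = i0 then h u else 1) with hF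
  have hms : ∀ i, MeasurableSet (t i) := fun i => measurableSet_Ioo
  have hvolt : ∀ i, volume (t i) = ENNReal.ofReal Q.len := by
    intro i
    rw [ht, Real.volume_Ioo]
    congr 1
    ring
  have hFi0eq : F i0 = Set.indicator (t i0) h := by
    funext u; rw [hF]; simp
  have hFothereq : ∀ i, i ≠ i0 → F i = Set.indicator (t i) (fun _ => (1:ℝ)) := by
    intro i hi; funext u; rw [hF]; simp [hi]
  have hFint : ∀ i, Integrable (F i) volume := by
    intro i
    by_cases hi : i = i0
    · subst hi
      rw [hFi0eq]
      exact (integrable_indicator_iff (hms i)).2 h1int.integrableOn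
    · rw [hFothereq i hi]
      refine (integrable_indicator_iff (hms i)).2 ?_
      exact integrableOn_const (by rw [hvolt i]; exact ENNReal.ofReal_ne_top)
  have hprod : (Q.piSet.indicator fun y : Fin d → ℝ => h (y i0)) = fun y => ∏ i, F i (y i) := by
    funext y
    by_cases hy : y ∈ Q.piSet
    · rw [Set.indicator_of_mem hy]
      have hyi : ∀ i, y i ∈ t i := fun i => hy i (Set.mem_univ i)
      have hFy : ∀ i, F i (y i) = if i = i0 then h (y i) else 1 := by
        intro i
        rw [hF]
        exact Set.indicator_of_mem (hyi i) _
      simp only [hFy]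
      rw [Finset.prod_ite_eq' Finset.univ i0 (fun i => h (y i))]
      simp
    · rw [Set.indicator_of_notMem hy]
      have : ∃ i, y i ∉ t i := by
        by_contra hcon
        push_neg at hcon
        exact hy fun i _ => hcon i
      obtain ⟨i, hi⟩ := this
      refine (Finset.prod_eq_zero (Finset.mem_univ i) ?_).symm
      rw [hF]
      exact Set.indicator_of_notMem hi _
  have hprodInt : Integrable (fun y : Fin d → ℝ => ∏ i, F i (y i)) volume :=
    MeasureTheory.Integrable.fintype_prod (fun i => hFint i)
  have hSint : IntegrableOn (fun y : Fin d → ℝ => h (y i0)) Q.piSet volume := by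
    refine (integrable_indicator_iff Q.measurableSet_piSet).1 ?_
    rw [hprod]; exact hprodInt
  have hI : ∫ y in Q.piSet, h (y i0) = ∏ i, ∫ u, F i u := by
    rw [← MeasureTheory.integral_indicator Q.measurableSet_piSet, hprod, volume_pi,
      MeasureTheory.integral_fintype_prod_eq_prod F]
  have hFi0 : ∫ u, F i0 u ≤ 8 * Q.len := by
    rw [hFi0eq, MeasureTheory.integral_indicator (hms i0)]
    calc ∫ u in t i0, h u ≤ ∫ u, h u :=
          setIntegral_le_integral h1int (Filter.Eventually.of_forall fun u => le_max_right _ _)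
      _ ≤ 8 * Q.len := h1val
  have hFother : ∀ i, i ≠ i0 → ∫ u, F i u = Q.len := by
    intro i hi
    rw [hFothereq i hi, MeasureTheory.integral_indicator (hms i), setIntegral_const, measureReal_def,
      hvolt i, ENNReal.toReal_ofReal Q.len_pos.le, smul_eq_mul, mul_one]
  have hprodval : ∏ i, ∫ u, F i u ≤ 8 * Q.vol := by
    rw [← Finset.mul_prod_erase Finset.univ (fun i => ∫ u, F i u) (Finset.mem_univ i0)]
    have hps : ∏ i ∈ Finset.univ.erase i0, ∫ u, F i u = Q.len ^ (d - 1) := by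
      rw [Finset.prod_congr rfl (fun i hi => hFother i (Finset.ne_of_mem_erase hi)),
        Finset.prod_const, Finset.card_erase_of_mem (Finset.mem_univ i0), Finset.card_univ,
        Fintype.card_fin]
    rw [hps]
    have hle : (0:ℝ) ≤ Q.len ^ (d - 1) := pow_nonneg Q.len_pos.le _
    have hvv : 8 * Q.len * Q.len ^ (d - 1) = 8 * Q.vol := by
      have hdd : d - 1 + 1 = d := Nat.sub_add_cancel hd
      have h2' : ∀ l : ℝ, l ^ d = l ^ (d - 1) * l := by
        intro l
        conv_lhs => rw [← hdd]
        rw [pow_succ]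
      have h2 : Q.len ^ d = Q.len ^ (d - 1) * Q.len := h2' Q.len
      show 8 * Q.len * Q.len ^ (d - 1) = 8 * Q.len ^ d
      rw [h2]; ring
    calc (∫ u, F i0 u) * Q.len ^ (d - 1) ≤ (8 * Q.len) * Q.len ^ (d - 1) :=
          mul_le_mul_of_nonneg_right hFi0 hle
      _ = 8 * Q.vol := by rw [← hvv]
  have key1 : IntegrableOn (fun x : Rd d => h (x i0)) Q.set volume := by
    rw [Q.set_eq_preimage]
    exact ((EuclideanSpace.volume_preserving_symm_measurableEquiv_toLp (Fin d)).integrableOn_comp_preimage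
      (MeasurableEquiv.measurableEmbedding _) (f := fun y : Fin d → ℝ => h (y i0))
      (s := Q.piSet)).2 hSint
  have key2 : ∫ x in Q.set, h (x i0) = ∫ y in Q.piSet, h (y i0) := by
    rw [Q.set_eq_preimage]
    exact (EuclideanSpace.volume_preserving_symm_measurableEquiv_toLp (Fin d)).setIntegral_preimage_emb
      (MeasurableEquiv.measurableEmbedding _) (fun y : Fin d → ℝ => h (y i0)) Q.piSet
  refine ⟨key1, ?_⟩
  rw [key2, hI]
  exact hprodval

lemma key_log (hd : 0 < d) (Q : Cube d) (s : Rd d) :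
    ∃ b : ℝ,
      IntegrableOn (fun x : Rd d => |Real.log ‖x - s‖ - b|) Q.set volume ∧
      ∫ x in Q.set, |Real.log ‖x - s‖ - b| ≤ (Real.log (2 * Real.sqrt d) + 8) * Q.vol := by
  have hsd : (1:ℝ) ≤ Real.sqrt d := by
    rw [Real.one_le_sqrt]
    exact_mod_cast hd
  have hl := Q.len_pos
  have hvol0 : (0:ℝ) < Q.vol := Q.vol_pos
  have hlog2d : 0 ≤ Real.log (2 * Real.sqrt d) := Real.log_nonneg (by nlinarith)
  have hmeasf : Measurable (fun x : Rd d => Real.log ‖x - s‖) :=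
    Real.measurable_log.comp ((measurable_id.sub measurable_const).norm)
  rcases le_or_gt (Real.sqrt d * Q.len) ‖Q.c - s‖ with hfar | hnear
  · -- far case
    have hD0 : 0 < ‖Q.c - s‖ := lt_of_lt_of_le (by positivity) hfar
    have hpt : ∀ x ∈ Q.set, |Real.log ‖x - s‖ - Real.log ‖Q.c - s‖| ≤ Real.log 2 := by
      intro x hx
      have hxc : ‖x - Q.c‖ ≤ Real.sqrt d * (Q.len / 2) := norm_sub_center_le Q hx
      have hxc' : ‖x - Q.c‖ ≤ ‖Q.c - s‖ / 2 := by nlinarith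
      have hlow : ‖Q.c - s‖ / 2 ≤ ‖x - s‖ := by
        have h2 : ‖Q.c - s‖ - ‖Q.c - x‖ ≤ ‖(Q.c - s) - (Q.c - x)‖ := norm_sub_norm_le _ _
        have h3 : (Q.c - s) - (Q.c - x) = x - s := by abel
        rw [h3, norm_sub_rev Q.c x] at h2
        linarith
      have hup : ‖x - s‖ ≤ 2 * ‖Q.c - s‖ := by
        have h1 : ‖x - s‖ ≤ ‖x - Q.c‖ + ‖Q.c - s‖ := by
          have := dist_triangle x Q.c s
          simpa [dist_eq_norm] using this
        linarith
      have hxs0 : 0 < ‖x - s‖ := by linarith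
      rw [abs_sub_le_iff]
      constructor
      · have h4 : Real.log ‖x - s‖ ≤ Real.log (2 * ‖Q.c - s‖) := Real.log_le_log hxs0 hup
        rw [Real.log_mul two_ne_zero hD0.ne'] at h4
        linarith
      · have h4 : Real.log ‖Q.c - s‖ ≤ Real.log (2 * ‖x - s‖) := by
          apply Real.log_le_log hD0; linarith
        rw [Real.log_mul two_ne_zero hxs0.ne'] at h4
        linarith
    have hconst : IntegrableOn (fun _ : Rd d => Real.log 2) Q.set volume :=
      integrableOn_const Q.volume_set_lt_top.ne
    have hint : IntegrableOn (fun x : Rd d => |Real.log ‖x - s‖ - Real.log ‖Q.c - s‖|)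
        Q.set volume := by
      refine Integrable.mono' hconst ((hmeasf.sub measurable_const).abs.aestronglyMeasurable) ?_
      filter_upwards [ae_restrict_mem Q.measurableSet_set] with x hx
      rw [Real.norm_eq_abs, abs_abs]
      exact hpt x hx
    refine ⟨Real.log ‖Q.c - s‖, hint, ?_⟩
    have h1 : ∫ x in Q.set, |Real.log ‖x - s‖ - Real.log ‖Q.c - s‖| ≤
        ∫ _x in Q.set, Real.log 2 := by
      refine integral_mono_of_nonneg (Filter.Eventually.of_forall fun x => abs_nonneg _) hconst ?_
      filter_upwards [ae_restrict_mem Q.measurableSet_set] with x hx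
      exact hpt x hx
    have h2 : ∫ _x in Q.set, (Real.log 2 : ℝ) = Real.log 2 * Q.vol := by
      rw [setIntegral_const, measureReal_def, Q.volume_set_toReal, smul_eq_mul]; ring
    have h3 : Real.log 2 ≤ Real.log (2 * Real.sqrt d) := by
      apply Real.log_le_log two_pos; nlinarith
    rw [h2] at h1
    nlinarith
  · -- near case
    have i0 : Fin d := ⟨0, hd⟩
    obtain ⟨hnint, hnval⟩ := near_integral hd Q i0 (s i0)
    have hφint : IntegrableOn
        (fun x : Rd d => Real.log (2 * Real.sqrt d) +
          max (Real.log Q.len - Real.log |x i0 - s i0|) 0) Q.set volume :=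
      (integrableOn_const Q.volume_set_lt_top.ne).add hnint
    have haehyp : ∀ᵐ x : Rd d, x i0 ≠ s i0 := by
      rw [ae_iff]
      have he : {x : Rd d | ¬ x i0 ≠ s i0} = {x : Rd d | x i0 = s i0} := by ext x; simp
      rw [he]; exact hyperplane_null i0 (s i0)
    have hpt : ∀ x ∈ Q.set, x i0 ≠ s i0 → |Real.log ‖x - s‖ - Real.log Q.len| ≤
        Real.log (2 * Real.sqrt d) + max (Real.log Q.len - Real.log |x i0 - s i0|) 0 := by
      intro x hx hne
      have hco : |x i0 - s i0| ≤ ‖x - s‖ := by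
        have h1 : (x - s) i0 = x i0 - s i0 := rfl
        have := abs_coord_le_norm (x - s) i0
        rwa [h1] at this
      have hu0 : 0 < |x i0 - s i0| := abs_pos.2 (sub_ne_zero.2 hne)
      have hxs0 : 0 < ‖x - s‖ := lt_of_lt_of_le hu0 hco
      have hup : ‖x - s‖ ≤ 2 * Real.sqrt d * Q.len := by
        have h1 : ‖x - s‖ ≤ ‖x - Q.c‖ + ‖Q.c - s‖ := by
          have := dist_triangle x Q.c s
          simpa [dist_eq_norm] using this
        have h2 := norm_sub_center_le Q hx
        nlinarith
      have hmax0 : (0:ℝ) ≤ max (Real.log Q.len - Real.log |x i0 - s i0|) 0 := le_max_right _ _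
      rw [abs_sub_le_iff]
      constructor
      · have h3 : Real.log ‖x - s‖ ≤ Real.log (2 * Real.sqrt d * Q.len) :=
          Real.log_le_log hxs0 hup
        rw [Real.log_mul (by positivity) hl.ne'] at h3
        linarith
      · have h5 : Real.log |x i0 - s i0| ≤ Real.log ‖x - s‖ := Real.log_le_log hu0 hco
        have h6 : Real.log Q.len - Real.log ‖x - s‖ ≤
            max (Real.log Q.len - Real.log |x i0 - s i0|) 0 :=
          le_trans (by linarith) (le_max_left _ _)
        linarith
    have hint : IntegrableOn (fun x : Rd d => |Real.log ‖x - s‖ - Real.log Q.len|)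
        Q.set volume := by
      refine Integrable.mono' hφint ((hmeasf.sub measurable_const).abs.aestronglyMeasurable) ?_
      filter_upwards [ae_restrict_mem Q.measurableSet_set, ae_restrict_of_ae haehyp] with x hx hne
      rw [Real.norm_eq_abs, abs_abs]
      exact hpt x hx hne
    refine ⟨Real.log Q.len, hint, ?_⟩
    have h1 : ∫ x in Q.set, |Real.log ‖x - s‖ - Real.log Q.len| ≤
        ∫ x in Q.set, (Real.log (2 * Real.sqrt d) +
          max (Real.log Q.len - Real.log |x i0 - s i0|) 0) := by
      refine integral_mono_of_nonneg (Filter.Eventually.of_forall fun x => abs_nonneg _) hφint ?_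
      filter_upwards [ae_restrict_mem Q.measurableSet_set, ae_restrict_of_ae haehyp] with x hx hne
      exact hpt x hx hne
    have h2 : ∫ x in Q.set, (Real.log (2 * Real.sqrt d) +
          max (Real.log Q.len - Real.log |x i0 - s i0|) 0) =
        Real.log (2 * Real.sqrt d) * Q.vol +
          ∫ x in Q.set, max (Real.log Q.len - Real.log |x i0 - s i0|) 0 := by
      rw [integral_add (integrableOn_const (C := Real.log (2 * Real.sqrt d)) Q.volume_set_lt_top.ne) hnint,
        setIntegral_const, measureReal_def, Q.volume_set_toReal, smul_eq_mul]
      ring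
    rw [h2] at h1
    nlinarith

lemma integral_logss_Q0 (s : Rd d) : ∫ x in (Q0 d).set, logss s x = 0 := by
  have hsym : (fun x : Rd d => -x) ⁻¹' (Q0 d).set = (Q0 d).set := by
    ext x
    simp only [Set.mem_preimage, Cube.set, Q0, Set.mem_setOf_eq]
    refine forall_congr' fun i => ?_
    have h1 : (-x : Rd d) i = -(x i) := rfl
    have h2 : ((0 : Rd d)) i = 0 := rfl
    rw [h1, h2, sub_zero, sub_zero, abs_neg]
  have hms := (Q0 d).measurableSet_set
  have hmp : MeasurePreserving (fun x : Rd d => -x)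
      (volume.restrict (Q0 d).set) (volume.restrict (Q0 d).set) := by
    refine ⟨measurable_neg, ?_⟩
    conv_lhs => rw [← hsym]
    rw [← Measure.restrict_map measurable_neg hms]
    congr 1
    exact Measure.map_neg_eq_self (volume : Measure (Rd d))
  have hcomp := hmp.integral_comp (MeasurableEquiv.neg (Rd d)).measurableEmbedding (logss s)
  have hodd : ∀ x : Rd d, logss s (-x) = -(logss s x) := by
    intro x
    simp only [logss]
    have h1 : -x - s = -(x + s) := by abel
    have h2 : -x + s = -(x - s) := by abel
    rw [h1, h2, norm_neg, norm_neg]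
    ring
  simp only [MeasurableEquiv.neg_apply, hodd] at hcomp
  rw [integral_neg] at hcomp
  linarith

lemma osc_logss_le (hd : 0 < d) (s : Rd d) (Q : Cube d) :
    osc Q (logss s) ≤ 2 * (Real.log (2 * Real.sqrt d) + 8) := by
  obtain ⟨b1, hi1, he1⟩ := key_log hd Q s
  obtain ⟨b2, hi2, he2⟩ := key_log hd Q (-s)
  have hvol : (0:ℝ) < Q.vol := Q.vol_pos
  have hsum : IntegrableOn
      (fun x : Rd d => |Real.log ‖x - s‖ - b1| + |Real.log ‖x - (-s)‖ - b2|) Q.set volume :=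
    hi1.add hi2
  have hmono : ∫ x in Q.set, |logss s x - (b1 - b2)| ≤
      ∫ x in Q.set, (|Real.log ‖x - s‖ - b1| + |Real.log ‖x - (-s)‖ - b2|) := by
    refine integral_mono_of_nonneg (Filter.Eventually.of_forall fun x => abs_nonneg _) hsum
      (Filter.Eventually.of_forall fun x => ?_)
    show |logss s x - (b1 - b2)| ≤ |Real.log ‖x - s‖ - b1| + |Real.log ‖x - (-s)‖ - b2|
    have h1 : logss s x - (b1 - b2) =
        (Real.log ‖x - s‖ - b1) - (Real.log ‖x - (-s)‖ - b2) := by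
      simp only [logss, sub_neg_eq_add]
      ring
    rw [h1]
    calc |(Real.log ‖x - s‖ - b1) - (Real.log ‖x - (-s)‖ - b2)|
        = |(Real.log ‖x - s‖ - b1) + -(Real.log ‖x - (-s)‖ - b2)| := by rw [sub_eq_add_neg]
      _ ≤ |Real.log ‖x - s‖ - b1| + |-(Real.log ‖x - (-s)‖ - b2)| := abs_add_le _ _
      _ = |Real.log ‖x - s‖ - b1| + |Real.log ‖x - (-s)‖ - b2| := by rw [abs_neg]
  rw [integral_add hi1 hi2] at hmono
  have h0 := osc_le_of_b Q (logss s) (b1 - b2)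
  calc osc Q (logss s) ≤ Q.vol⁻¹ * ∫ x in Q.set, |logss s x - (b1 - b2)| := h0
    _ ≤ Q.vol⁻¹ * (2 * (Real.log (2 * Real.sqrt d) + 8) * Q.vol) := by
        apply mul_le_mul_of_nonneg_left _ (inv_nonneg.2 hvol.le)
        linarith
    _ = 2 * (Real.log (2 * Real.sqrt d) + 8) := by field_simp

end Auxiliary

/-- The norms `‖log_{s,-s}‖*_BMO` are bounded uniformly in `s ∈ ℝ^d`. -/
theorem statement_11 {d : ℕ} (hd : 0 < d) :
    ∃ C : ℝ, ∀ s : Rd d,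
      BddAbove (Set.range fun Q : Cube d => osc Q (logss s)) ∧
      bmoNorm (logss s) ≤ C := by
  refine ⟨2 * (Real.log (2 * Real.sqrt d) + 8), fun s => ?_⟩
  have hosc := osc_logss_le hd s
  have hbdd : BddAbove (Set.range fun Q : Cube d => osc Q (logss s)) := by
    refine ⟨2 * (Real.log (2 * Real.sqrt d) + 8), ?_⟩
    rintro y ⟨Q, rfl⟩
    exact hosc Q
  refine ⟨hbdd, ?_⟩
  have havg : avg (Q0 d) (logss s) = 0 := by
    rw [avg, integral_logss_Q0 s, mul_zero]
  rw [bmoNorm, havg, abs_zero, add_zero]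
  haveI : Nonempty (Cube d) := ⟨Q0 d⟩
  exact ciSup_le hosc

end TL
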